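/- For every s ≥ 2, the sum over triples 1 ≤ j_1 < j_2 < j_3 ≤ s of Π_{p=1}^{3} (2j_p - p)!!/(2j_p - (p+1))!! equals (1/405) * ((2s-1)!!/(2s-4)!!) * (s-2)(20 s^2 - 5s - 3). -/

import Mathlib

open Nat

lemma dfac_ne (n : ℕ) : ((n‼ : ℚ)) ≠ 0 := by
  exact_mod_cast (Nat.doubleFactorial_pos n).ne'

lemma dfac_even (s : ℕ) (hs : 1 ≤ s) :
    ((2*s)‼ : ℚ) = 2*(s:ℚ) * ((2*s-2)‼ : ℚ) := by
  have h4 : 2*s = (2*s-2)+2 := by omega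
  rw [h4, Nat.doubleFactorial_add_two]
  have : ((2*s-2 : ℕ) : ℚ) = 2*(s:ℚ) - 2 := by
    push_cast [Nat.cast_sub (by omega : 2 ≤ 2*s)]; ring
  push_cast [this]; ring

lemma dfac_odd (s : ℕ) (hs : 1 ≤ s) :
    ((2*s+1)‼ : ℚ) = (2*(s:ℚ)+1) * ((2*s-1)‼ : ℚ) := by
  have h4 : 2*s+1 = (2*s-1)+2 := by omega
  rw [h4, Nat.doubleFactorial_add_two]
  have : ((2*s-1 : ℕ) : ℚ) = 2*(s:ℚ) - 1 := by
    push_cast [Nat.cast_sub (by omega : 1 ≤ 2*s)]; ring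
  push_cast [this]; ring

lemma Esum (s : ℕ) (hs : 1 ≤ s) :
    ∑ j ∈ Finset.Icc 1 s, (((2*j-1)‼ : ℚ) / ((2*j-2)‼ : ℚ))
      = ((2*s+1)‼ : ℚ) / (3 * ((2*s-2)‼ : ℚ)) := by
  induction s, hs using Nat.le_induction with
  | base => norm_num [Nat.doubleFactorial]
  | succ s hs ih =>
    rw [Finset.sum_Icc_succ_top (by omega : 1 ≤ s+1), ih]
    have h1 : 2*(s+1)-1 = 2*s+1 := by omega
    have h2 : 2*(s+1)-2 = 2*s := by omega
    have h3 : 2*(s+1)+1 = 2*s+3 := by omega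
    have h5 : 2*s+3 = (2*s+1)+2 := by omega
    rw [h1, h2, h3, h5, Nat.doubleFactorial_add_two]
    rw [dfac_even s hs]
    have e1 := dfac_ne (2*s-2)
    have e2 : (s:ℚ) ≠ 0 := by positivity
    push_cast
    field_simp
    ring

lemma Dsum (s : ℕ) (hs : 1 ≤ s) :
    ∑ j1 ∈ Finset.Icc 1 s, ∑ j2 ∈ Finset.Icc (j1+1) s,
        (((2*j1-1)‼ : ℚ) / ((2*j1-2)‼ : ℚ)) * (((2*j2-2)‼ : ℚ) / ((2*j2-3)‼ : ℚ))
      = (s:ℚ) * ((s:ℚ)-1) * (4*(s:ℚ)+1) / 9 := by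
  induction s, hs using Nat.le_induction with
  | base => norm_num
  | succ s hs ih =>
    rw [Finset.sum_Icc_succ_top (by omega : 1 ≤ s+1)]
    rw [show Finset.Icc (s+1+1) (s+1) = ∅ from Finset.Icc_eq_empty (by omega)]
    rw [Finset.sum_empty, add_zero]
    rw [Finset.sum_congr rfl (fun j1 hj1 => by
      rw [Finset.sum_Icc_succ_top
        (show j1+1 ≤ s+1 by have := (Finset.mem_Icc.mp hj1).2; omega)])]
    rw [Finset.sum_add_distrib, ih, ← Finset.sum_mul, Esum s hs]
    have h1 : 2*(s+1)-2 = 2*s := by omega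
    have h2 : 2*(s+1)-3 = 2*s-1 := by omega
    rw [h1, h2, dfac_even s hs, dfac_odd s hs]
    have e1 := dfac_ne (2*s-2)
    have e2 := dfac_ne (2*s-1)
    have e3 : (s:ℚ) ≠ 0 := by
      have : 0 < s := hs; positivity
    push_cast
    field_simp
    ring

lemma dfac_even2 (s : ℕ) (hs : 2 ≤ s) :
    ((2*s-2)‼ : ℚ) = (2*(s:ℚ)-2) * ((2*s-4)‼ : ℚ) := by
  have h4 : 2*s-2 = (2*s-4)+2 := by omega
  rw [h4, Nat.doubleFactorial_add_two]
  have : ((2*s-4 : ℕ) : ℚ) = 2*(s:ℚ) - 4 := by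
    push_cast [Nat.cast_sub (by omega : 4 ≤ 2*s)]; ring
  push_cast [this]; ring

theorem simplex_bulk_three (s : ℕ) (hs : 2 ≤ s) :
    ∑ j1 ∈ Finset.Icc 1 s, ∑ j2 ∈ Finset.Icc (j1 + 1) s,
      ∑ j3 ∈ Finset.Icc (j2 + 1) s,
        (((2 * j1 - 1)‼ : ℚ) / ((2 * j1 - 2)‼ : ℚ)) *
          (((2 * j2 - 2)‼ : ℚ) / ((2 * j2 - 3)‼ : ℚ)) *
          (((2 * j3 - 3)‼ : ℚ) / ((2 * j3 - 4)‼ : ℚ)) =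
      (1 / 405 : ℚ) * (((2 * s - 1)‼ : ℚ) / ((2 * s - 4)‼ : ℚ)) *
        (((s : ℚ) - 2) * (20 * (s : ℚ) ^ 2 - 5 * (s : ℚ) - 3)) := by
  induction s, hs using Nat.le_induction with
  | base =>
    norm_num [show Finset.Icc 1 2 = {1, 2} from rfl]
  | succ s hs ih =>
    rw [Finset.sum_Icc_succ_top (by omega : 1 ≤ s+1)]
    rw [show Finset.Icc (s+1+1) (s+1) = ∅ from Finset.Icc_eq_empty (by omega)]
    rw [Finset.sum_empty, add_zero]
    rw [Finset.sum_congr rfl (fun j1 hj1 => by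
      rw [Finset.sum_Icc_succ_top
        (show j1+1 ≤ s+1 by have := (Finset.mem_Icc.mp hj1).2; omega),
        show Finset.Icc (s+1+1) (s+1) = ∅ from Finset.Icc_eq_empty (by omega),
        Finset.sum_empty, add_zero,
        Finset.sum_congr rfl (fun j2 hj2 => by
          rw [Finset.sum_Icc_succ_top
            (show j2+1 ≤ s+1 by have := (Finset.mem_Icc.mp hj2).2; omega)]),
        Finset.sum_add_distrib, ← Finset.sum_mul])]
    rw [Finset.sum_add_distrib, ← Finset.sum_mul, ih, Dsum s (by omega)]
    have h1 : 2*(s+1)-3 = 2*s-1 := by omega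
    have h2 : 2*(s+1)-4 = 2*s-2 := by omega
    have h3 : 2*(s+1)-1 = 2*s+1 := by omega
    rw [h1, h2, h3, dfac_odd s (by omega), dfac_even2 s hs]
    have e1 := dfac_ne (2*s-4)
    have e2 := dfac_ne (2*s-1)
    have e3 : (2*(s:ℚ)-2) ≠ 0 := by
      have : (2:ℚ) ≤ (s:ℚ) := by exact_mod_cast hs
      nlinarith
    have e4 : (s:ℚ) - 1 ≠ 0 := by
      have : (2:ℚ) ≤ (s:ℚ) := by exact_mod_cast hs
      linarith
    push_cast
    field_simp
    ring
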